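/- Let D = D₁ × … × D_n be a finite direct product of strongly primary monoids, none of which is half-factorial. Then for every finite nonempty set L ⊆ ℕ there exists y_L ∈ ℕ₀ such that for all y ≥ y_L, the shifted set y + L is not a set of lengths of D, i.e., y + L ∉ L(D). -/

import Mathlib

open Classical

/-- The set of factorization lengths of `a` into irreducible elements (atoms);
by convention `{0}` for invertible elements. -/
noncomputable def mLengths {H : Type*} [Monoid H] (a : H) : Set ℕ :=
  if IsUnit a then {0}
  else {n | ∃ l : List H, l.length = n ∧ (∀ x ∈ l, Irreducible x) ∧ l.prod = a}

/-- A commutative cancellative monoid `M` is strongly primary if it has a non-unit and for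
every non-unit `a` there is `n ∈ ℕ` such that every product of `n` non-units lies in `aM`. -/
def StronglyPrimary (M : Type*) [CancelCommMonoid M] : Prop :=
  (∃ a : M, ¬IsUnit a) ∧
    ∀ a : M, ¬IsUnit a → ∃ n : ℕ, 0 < n ∧
      ∀ l : List M, l.length = n → (∀ x ∈ l, ¬IsUnit x) → a ∣ l.prod

section Aux

variable {α : Type*}

lemma aux_list_prod_isUnit [CommMonoid α] : ∀ {l : List α}, (∀ x ∈ l, IsUnit x) → IsUnit l.prod
  | [], _ => by simp
  | (x :: l), h => by
    rw [List.prod_cons]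
    exact (h x (List.mem_cons_self)).mul
      (aux_list_prod_isUnit fun y hy => h y (List.mem_cons_of_mem _ hy))

lemma aux_irr_mul_unit [CommMonoid α] {p u : α} (hp : Irreducible p) (hu : IsUnit u) :
    Irreducible (p * u) := by
  obtain ⟨w, rfl⟩ := hu
  constructor
  · intro h
    exact hp.not_isUnit (isUnit_of_dvd_unit (dvd_mul_right p w) h)
  · intro x y hxy
    have hx : p = x * (y * ↑w⁻¹) := by
      calc p = p * ↑w * ↑w⁻¹ := by rw [mul_assoc, Units.mul_inv, mul_one]
      _ = x * (y * ↑w⁻¹) := by rw [hxy, mul_assoc]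
    rcases hp.isUnit_or_isUnit hx with h | h
    · exact Or.inl h
    · refine Or.inr ?_
      have h2 : IsUnit (y * ↑w⁻¹ * ↑w) := h.mul w.isUnit
      simpa [mul_assoc, Units.inv_mul] using h2

lemma aux_bound [CancelCommMonoid α] {a : α} {nb : ℕ}
    (hnb : ∀ l : List α, l.length = nb → (∀ x ∈ l, ¬IsUnit x) → a ∣ l.prod)
    {l : List α} (hl : ∀ x ∈ l, ¬IsUnit x) (hp : l.prod = a) : l.length ≤ nb := by
  by_contra hcon
  push_neg at hcon
  have htake : a ∣ (l.take nb).prod := by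
    refine hnb _ ?_ (fun x hx => hl x (List.take_subset _ _ hx))
    rw [List.length_take]; omega
  obtain ⟨e, he⟩ := htake
  have hsplit : (l.take nb).prod * (l.drop nb).prod = a := by
    rw [List.prod_take_mul_prod_drop, hp]
  rw [he] at hsplit
  have hkey : e * (l.drop nb).prod = 1 := by
    have h2 : a * (e * (l.drop nb).prod) = a * 1 := by
      rw [← mul_assoc, hsplit, mul_one]
    exact mul_left_cancel h2
  have hunit : IsUnit (l.drop nb).prod :=
    IsUnit.of_mul_eq_one _ (by rw [mul_comm]; exact hkey)
  have hlen : 0 < (l.drop nb).length := by rw [List.length_drop]; omega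
  obtain ⟨x, hx⟩ := List.exists_mem_of_length_pos hlen
  exact hl x (List.drop_subset _ _ hx)
    (isUnit_of_dvd_unit (List.dvd_prod hx) hunit)

lemma aux_atomic [CancelCommMonoid α] {a : α} (ha : ¬IsUnit a) {nb : ℕ}
    (hnb : ∀ l : List α, l.length = nb → (∀ x ∈ l, ¬IsUnit x) → a ∣ l.prod) :
    ∃ l : List α, l ≠ [] ∧ (∀ x ∈ l, Irreducible x) ∧ l.prod = a := by
  classical
  set P : ℕ → Prop := fun k =>
    ∃ l : List α, l.length = k ∧ (∀ x ∈ l, ¬IsUnit x) ∧ l.prod = a with hP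
  have h1 : P 1 := ⟨[a], rfl, by simpa using ha, by simp⟩
  have hbd : ∀ k, P k → k ≤ nb := by
    rintro k ⟨l, hlen, hnu, hpr⟩
    exact hlen ▸ aux_bound hnb hnu hpr
  have h1nb : 1 ≤ nb := hbd 1 h1
  have hk0 : P (Nat.findGreatest P nb) := Nat.findGreatest_spec h1nb h1
  have hk01 : 1 ≤ Nat.findGreatest P nb := Nat.le_findGreatest h1nb h1
  have hmax : ¬ P (Nat.findGreatest P nb + 1) := by
    intro hp
    exact Nat.findGreatest_is_greatest (Nat.lt_succ_self _) (hbd _ hp) hp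
  obtain ⟨l, hlen, hnu, hpr⟩ := hk0
  refine ⟨l, ?_, ?_, hpr⟩
  · intro h; rw [h] at hlen; simp at hlen; omega
  · intro x hx
    by_contra hirr
    rw [irreducible_iff] at hirr
    push_neg at hirr
    obtain ⟨u, v, huv, hu, hv⟩ := hirr (hnu x hx)
    obtain ⟨s, t, rfl⟩ := List.append_of_mem hx
    refine hmax ⟨s ++ u :: v :: t, ?_, ?_, ?_⟩
    · simp at hlen ⊢; omega
    · intro y hy
      simp only [List.mem_append, List.mem_cons] at hy
      rcases hy with hy | hy | hy | hy
      · exact hnu y (by simp [hy])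
      · exact hy ▸ hu
      · exact hy ▸ hv
      · exact hnu y (by simp [hy])
    · rw [← hpr]
      simp [List.prod_append, List.prod_cons, huv, mul_assoc]

lemma aux_pow_dvd_prod [CommMonoid α] {a : α} {Mb : ℕ}
    (h : ∀ w : List α, w.length = Mb → (∀ x ∈ w, ¬IsUnit x) → a ∣ w.prod) :
    ∀ (t : ℕ) (w : List α), (∀ x ∈ w, ¬IsUnit x) → t * Mb ≤ w.length → a ^ t ∣ w.prod := by
  intro t
  induction t with
  | zero => intro w _ _; simpa using one_dvd _
  | succ t ih =>
    intro w hw hlen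
    have hkey : t * Mb + Mb ≤ w.length := by
      rw [← Nat.succ_mul]; exact hlen
    have hM : Mb ≤ w.length := le_trans (Nat.le_add_left _ _) hkey
    have h1 : a ∣ (w.take Mb).prod := by
      refine h _ ?_ (fun x hx => hw x (List.take_subset _ _ hx))
      rw [List.length_take]; omega
    have h2 : a ^ t ∣ (w.drop Mb).prod := by
      refine ih _ (fun x hx => hw x (List.drop_subset _ _ hx)) ?_
      rw [List.length_drop]
      exact Nat.le_sub_of_add_le hkey
    calc a ^ (t + 1) = a * a ^ t := by rw [pow_succ, mul_comm]
    _ ∣ (w.take Mb).prod * (w.drop Mb).prod := mul_dvd_mul h1 h2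
    _ = w.prod := List.prod_take_mul_prod_drop w Mb

lemma aux_length_le_sum_countP {n : ℕ} (P : Fin n → α → Bool) (l : List α)
    (h : ∀ x ∈ l, ∃ i, P i x) : l.length ≤ ∑ i, l.countP (P i) := by
  induction l with
  | nil => simp
  | cons a l ih =>
    simp only [List.countP_cons, List.length_cons]
    rw [Finset.sum_add_distrib]
    have h1 : l.length ≤ ∑ i, l.countP (P i) :=
      ih (fun x hx => h x (List.mem_cons_of_mem _ hx))
    obtain ⟨i0, hi0⟩ := h a (List.mem_cons_self)
    have h2 : 1 ≤ ∑ i, (if P i a then 1 else 0) := by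
      have := Finset.single_le_sum (f := fun i => if P i a = true then 1 else 0)
        (fun i _ => Nat.zero_le _) (Finset.mem_univ i0)
      simpa [hi0] using this
    exact Nat.add_le_add h1 h2

lemma aux_pow_fact [CommMonoid α] {Z : List α} (hZ : ∀ y ∈ Z, Irreducible y) (k : ℕ) :
    ∃ W : List α, W.length = k * Z.length ∧ (∀ y ∈ W, Irreducible y) ∧ W.prod = Z.prod ^ k := by
  induction k with
  | zero => exact ⟨[], by simp, by simp, by simp⟩
  | succ k ih =>
    obtain ⟨W, hlen, hirr, hprod⟩ := ih
    refine ⟨Z ++ W, ?_, ?_, ?_⟩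
    · simp [hlen, Nat.succ_mul, Nat.add_comm]
    · intro y hy
      rcases List.mem_append.mp hy with hy | hy
      · exact hZ y hy
      · exact hirr y hy
    · rw [List.prod_append, hprod, pow_succ, mul_comm]

lemma aux_mem_mLengths {H : Type*} [CommMonoid H] {b : H} (hb : ¬IsUnit b) {m : List H}
    (hm : m ≠ []) (hi : ∀ x ∈ m, Irreducible x) {w : H} (hw : IsUnit w)
    (hbw : b = m.prod * w) : m.length ∈ mLengths b := by
  rw [mLengths, if_neg hb]
  cases m with
  | nil => exact absurd rfl hm
  | cons h tl =>
    refine ⟨(h * w) :: tl, by simp, ?_, ?_⟩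
    · intro x hx
      rcases List.mem_cons.mp hx with rfl | hx
      · exact aux_irr_mul_unit (hi h (by simp)) hw
      · exact hi x (by simp [hx])
    · simp only [List.prod_cons] at hbw ⊢
      rw [hbw, mul_right_comm]

variable {ι : Type*} [DecidableEq ι] {D : ι → Type*} [∀ i, CommMonoid (D i)]

lemma aux_pi_isUnit_iff {f : ∀ i, D i} : IsUnit f ↔ ∀ i, IsUnit (f i) := by
  constructor
  · intro h i
    exact h.map (Pi.evalMonoidHom D i)
  · intro h
    refine isUnit_iff_exists.mpr ⟨fun i => ↑((h i).unit)⁻¹, ?_, ?_⟩ <;>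
    · funext i
      simp [Pi.mul_apply, IsUnit.unit_spec]

lemma aux_irr_pi {z : ∀ i, D i} {i : ι} (hzi : Irreducible (z i))
    (hz : ∀ j, j ≠ i → IsUnit (z j)) : Irreducible z := by
  constructor
  · intro h
    exact hzi.not_isUnit (aux_pi_isUnit_iff.mp h i)
  · intro u v huv
    have hcomp : z i = u i * v i := by rw [huv]; rfl
    have key : ∀ u v : ∀ i, D i, z = u * v → IsUnit (u i) → IsUnit u := by
      intro u v huv hui
      rw [aux_pi_isUnit_iff]
      intro j
      by_cases hj : j = i
      · subst hj; exact hui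
      · have h1 : IsUnit (u j * v j) := by
          have := hz j hj; rw [huv] at this; exact this
        exact isUnit_of_mul_isUnit_left h1
    rcases hzi.isUnit_or_isUnit hcomp with h | h
    · exact Or.inl (key u v huv h)
    · refine Or.inr (key v u (by rw [huv, mul_comm]) h)

lemma aux_irr_single {i : ι} {x : D i} (hx : Irreducible x) :
    Irreducible (Pi.mulSingle i x) := by
  refine aux_irr_pi (z := Pi.mulSingle i x) (i := i) ?_ ?_
  · rw [Pi.mulSingle_eq_same]; exact hx
  · intro j hj
    rw [Pi.mulSingle_eq_of_ne hj]
    exact isUnit_one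

lemma aux_unit_off {x : ∀ i, D i} (hx : Irreducible x) {i j : ι} (hij : j ≠ i)
    (hi : ¬IsUnit (x i)) : IsUnit (x j) := by
  by_contra hj
  have hdec : x = Pi.mulSingle i (x i) * Function.update x i 1 := by
    funext k
    by_cases hk : k = i
    · subst hk
      simp [Pi.mul_apply, Pi.mulSingle_eq_same, Function.update_self]
    · simp [Pi.mul_apply, Pi.mulSingle_eq_of_ne hk, Function.update_of_ne hk]
  rcases hx.isUnit_or_isUnit hdec with h | h
  · exact hi (by simpa [Pi.mulSingle_eq_same] using aux_pi_isUnit_iff.mp h i)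
  · have := aux_pi_isUnit_iff.mp h j
    rw [Function.update_of_ne hij] at this
    exact hj this

end Aux

/-- Let `D = D₁ × … × D_n` be a finite direct product of strongly primary monoids, none of
which is half-factorial. Then for every finite nonempty set `L` of positive integers there is
`y_L` such that for all `y ≥ y_L` the shifted set `y + L` is not a set of lengths of `D`. -/
theorem stmt9 {n : ℕ} (hn : 0 < n) (D : Fin n → Type*) [∀ i, CancelCommMonoid (D i)]
    (hsp : ∀ i, StronglyPrimary (D i))
    (hnhf : ∀ i, ∃ a : D i, ∃ m ∈ mLengths a, ∃ k ∈ mLengths a, m ≠ k)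
    (L : Set ℕ) (hfin : L.Finite) (hne : L.Nonempty) (hpos : ∀ m ∈ L, 0 < m) :
    ∃ yL : ℕ, ∀ y ≥ yL, ∀ b : (∀ i, D i), mLengths b ≠ (fun m => y + m) '' L := by
  classical
  choose a u hu v hv huv using hnhf
  have hau : ∀ i, ¬IsUnit (a i) := by
    intro i h
    have h1 := hu i; have h2 := hv i
    rw [mLengths, if_pos h] at h1 h2
    simp only [Set.mem_singleton_iff] at h1 h2
    exact huv i (h1.trans h2.symm)
  choose Mb hMbpos hMb using fun i => (hsp i).2 (a i) (hau i)
  -- two factorizations of a i, of different lengths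
  have hz : ∀ i, ∃ zp zq : List (D i), (∀ x ∈ zp, Irreducible x) ∧ (∀ x ∈ zq, Irreducible x) ∧
      zp.prod = a i ∧ zq.prod = a i ∧ zp.length < zq.length := by
    intro i
    have h1 := hu i; have h2 := hv i
    rw [mLengths, if_neg (hau i)] at h1 h2
    obtain ⟨l1, hl1, hl1i, hl1p⟩ := h1
    obtain ⟨l2, hl2, hl2i, hl2p⟩ := h2
    rcases (huv i).lt_or_gt with h | h
    · exact ⟨l1, l2, hl1i, hl2i, hl1p, hl2p, by omega⟩
    · exact ⟨l2, l1, hl2i, hl1i, hl2p, hl1p, by omega⟩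
  choose zp zq hzp hzq hzpp hzqp hlt using hz
  set t := hfin.toFinset.card with htdef
  have ht1 : 1 ≤ t := by
    rw [htdef]
    exact Finset.card_pos.mpr ((Set.Finite.toFinset_nonempty hfin).mpr hne)
  set K := Finset.univ.sup (fun i => t * Mb i) with hKdef
  refine ⟨n * K, ?_⟩
  intro y hy b hEq
  obtain ⟨m0, hm0⟩ := hne
  have hm0pos : 0 < m0 := hpos m0 hm0
  -- b is not a unit
  have hbu : ¬IsUnit b := by
    intro h
    have hmem : y + m0 ∈ mLengths b := hEq ▸ ⟨m0, hm0, rfl⟩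
    rw [mLengths, if_pos h] at hmem
    simp only [Set.mem_singleton_iff] at hmem
    omega
  -- a factorization of b of length y + m0
  have hmem : y + m0 ∈ mLengths b := hEq ▸ ⟨m0, hm0, rfl⟩
  rw [mLengths, if_neg hbu] at hmem
  obtain ⟨l, hlen, hlirr, hlprod⟩ := hmem
  -- pigeonhole: find a coordinate with many atoms non-unit there
  set P : Fin n → (∀ j, D j) → Bool := fun i x => decide (¬IsUnit (x i)) with hPdef
  have hPiff : ∀ i x, P i x = true ↔ ¬IsUnit (x i) := by
    intro i x; simp [hPdef]
  have hsum : l.length ≤ ∑ i, l.countP (P i) := by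
    refine aux_length_le_sum_countP P l ?_
    intro x hx
    have hxnu : ¬IsUnit x := (hlirr x hx).not_isUnit
    by_contra hcon
    push_neg at hcon
    refine hxnu (aux_pi_isUnit_iff.mpr ?_)
    intro i
    by_contra hcon2
    exact hcon i ((hPiff i x).mpr hcon2)
  have hpig : ∃ i, K ≤ l.countP (P i) := by
    by_contra hcon
    push_neg at hcon
    have hb2 : (∑ i, l.countP (P i)) + n ≤ n * K := by
      have h1 : ∀ i ∈ Finset.univ (α := Fin n), l.countP (P i) + 1 ≤ K :=
        fun i _ => hcon i
      have h2 : ∑ i : Fin n, (l.countP (P i) + 1) ≤ ∑ _i : Fin n, K :=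
        Finset.sum_le_sum h1
      rw [Finset.sum_add_distrib, Finset.sum_const, Finset.sum_const] at h2
      simpa [Finset.card_univ, Nat.smul_one_eq_cast, smul_eq_mul] using h2
    have h3 : n * K ≤ y := hy
    linarith [hlen ▸ hsum]
  obtain ⟨i, hKi⟩ := hpig
  have hKMb : t * Mb i ≤ K := Finset.le_sup (f := fun i => t * Mb i) (Finset.mem_univ i)
  -- split l
  set s := l.filter (P i) with hsdef
  set r := l.filter (fun x => !(P i x)) with hrdef
  have hperm : List.Perm (s ++ r) l := List.filter_append_perm (P i) l
  have hsl : t * Mb i ≤ s.length := by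
    rw [hsdef, ← List.countP_eq_length_filter]
    exact le_trans hKMb hKi
  set s1 := s.take (t * Mb i) with hs1def
  set s2 := s.drop (t * Mb i) with hs2def
  have hs1len : s1.length = t * Mb i := by
    rw [hs1def, List.length_take]; omega
  have hsmem : ∀ x ∈ s, Irreducible x ∧ ¬IsUnit (x i) := by
    intro x hx
    rw [hsdef, List.mem_filter] at hx
    exact ⟨hlirr x hx.1, (hPiff i x).mp hx.2⟩
  have hs1sub : ∀ x ∈ s1, x ∈ s := fun x hx => List.take_subset _ _ hx
  -- a i ^ t divides the i-th component of s1.prod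
  have hdvd : (a i) ^ t ∣ s1.prod i := by
    have heval : s1.prod i = (s1.map (fun x => x i)).prod := by
      have := map_list_prod (Pi.evalMonoidHom D i) s1
      simpa using this
    rw [heval]
    refine aux_pow_dvd_prod (hMb i) t _ ?_ ?_
    · intro x hx
      obtain ⟨x', hx', rfl⟩ := List.mem_map.mp hx
      exact (hsmem x' (hs1sub x' hx')).2
    · rw [List.length_map, hs1len]
  obtain ⟨c, hc⟩ := hdvd
  -- off-coordinate components of s1.prod are units
  have hoff : ∀ j, j ≠ i → IsUnit (s1.prod j) := by
    intro j hj
    have heval : s1.prod j = (s1.map (fun x => x j)).prod := by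
      have := map_list_prod (Pi.evalMonoidHom D j) s1
      simpa using this
    rw [heval]
    refine aux_list_prod_isUnit ?_
    intro x hx
    obtain ⟨x', hx', rfl⟩ := List.mem_map.mp hx
    obtain ⟨hirr, hnui⟩ := hsmem x' (hs1sub x' hx')
    exact aux_unit_off hirr hj hnui
  -- decompose s1.prod
  have hs1prod : s1.prod = Pi.mulSingle i ((a i) ^ t) * Function.update (s1.prod) i c := by
    funext j
    by_cases hj : j = i
    · subst hj
      simp only [Pi.mul_apply, Pi.mulSingle_eq_same, Function.update_self]
      exact hc
    · simp only [Pi.mul_apply, Pi.mulSingle_eq_of_ne hj, Function.update_of_ne hj, one_mul]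
  -- factor the cofactor Q
  obtain ⟨f', w, hf'irr, hwu, hQ⟩ : ∃ (f' : List (∀ j, D j)) (w : ∀ j, D j),
      (∀ x ∈ f', Irreducible x) ∧ IsUnit w ∧
      Function.update (s1.prod) i c = f'.prod * w := by
    by_cases hcU : IsUnit c
    · refine ⟨[], Function.update (s1.prod) i c, by simp, ?_, by simp⟩
      rw [aux_pi_isUnit_iff]
      intro j
      by_cases hj : j = i
      · subst hj; rw [Function.update_self]; exact hcU
      · rw [Function.update_of_ne hj]; exact hoff j hj
    · obtain ⟨nc, hncpos, hnc⟩ := (hsp i).2 c hcU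
      obtain ⟨g, hgne, hgirr, hgprod⟩ := aux_atomic hcU hnc
      refine ⟨g.map (Pi.mulSingle i), Function.update (Function.update (s1.prod) i c) i 1,
        ?_, ?_, ?_⟩
      · intro x hx
        obtain ⟨x', hx', rfl⟩ := List.mem_map.mp hx
        exact aux_irr_single (hgirr x' hx')
      · rw [aux_pi_isUnit_iff]
        intro j
        by_cases hj : j = i
        · subst hj; rw [Function.update_self]; exact isUnit_one
        · rw [Function.update_of_ne hj, Function.update_of_ne hj]; exact hoff j hj
      · have hmprod : (g.map (Pi.mulSingle i)).prod = Pi.mulSingle i c := by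
          have hcoe2 : ⇑(MonoidHom.mulSingle D i) = (Pi.mulSingle i : D i → ∀ j, D j) := rfl
          have h9 := (map_list_prod (MonoidHom.mulSingle D i) g).symm
          rw [hcoe2, hgprod] at h9
          exact h9
        rw [hmprod]
        funext j
        by_cases hj : j = i
        · subst hj
          simp [Pi.mul_apply, Pi.mulSingle_eq_same, Function.update_self]
        · simp [Pi.mul_apply, Pi.mulSingle_eq_of_ne hj, Function.update_of_ne hj]
  -- lengths of the two factorizations of a i
  set p' := (zp i).length with hp'def
  set q' := (zq i).length with hq'def
  have hp'pos : 1 ≤ p' := by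
    rw [hp'def]
    rcases List.eq_nil_or_concat (zp i) with h | _
    · exfalso
      have := hzpp i
      rw [h] at this
      exact hau i (this ▸ isUnit_one)
    · by_contra hcon
      push_neg at hcon
      interval_cases h : (zp i).length
      · exact hau i ((List.length_eq_zero_iff.mp h ▸ hzpp i : (([] : List (D i)).prod = a i)) ▸
          isUnit_one)
  have hpq' : p' < q' := hlt i
  -- the irreducible lists giving powers of Pi.mulSingle i (a i)
  have hZq : ∀ x ∈ (zq i).map (Pi.mulSingle i), Irreducible x := by
    intro x hx
    obtain ⟨x', hx', rfl⟩ := List.mem_map.mp hx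
    exact aux_irr_single (hzq i x' hx')
  have hZp : ∀ x ∈ (zp i).map (Pi.mulSingle i), Irreducible x := by
    intro x hx
    obtain ⟨x', hx', rfl⟩ := List.mem_map.mp hx
    exact aux_irr_single (hzp i x' hx')
  have hcoe : ⇑(MonoidHom.mulSingle D i) = (Pi.mulSingle i : D i → ∀ j, D j) := rfl
  have hZqprod : ((zq i).map (Pi.mulSingle i)).prod = Pi.mulSingle i (a i) := by
    have := (map_list_prod (MonoidHom.mulSingle D i) (zq i)).symm
    rw [hcoe, hzqp i] at this
    exact this
  have hZpprod : ((zp i).map (Pi.mulSingle i)).prod = Pi.mulSingle i (a i) := by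
    have := (map_list_prod (MonoidHom.mulSingle D i) (zp i)).symm
    rw [hcoe, hzpp i] at this
    exact this
  have hW : ∀ j ≤ t, ∃ W : List (∀ k, D k), W.length = j * q' + (t - j) * p' ∧
      (∀ x ∈ W, Irreducible x) ∧ W.prod = Pi.mulSingle i ((a i) ^ t) := by
    intro j hj
    obtain ⟨Wq, hWql, hWqi, hWqp⟩ := aux_pow_fact hZq j
    obtain ⟨Wp, hWpl, hWpi, hWpp⟩ := aux_pow_fact hZp (t - j)
    refine ⟨Wq ++ Wp, ?_, ?_, ?_⟩
    · rw [List.length_append, hWql, hWpl, List.length_map, List.length_map]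
    · intro x hx
      rcases List.mem_append.mp hx with hx | hx
      · exact hWqi x hx
      · exact hWpi x hx
    · rw [List.prod_append, hWqp, hWpp, hZqprod, hZpprod, ← pow_add,
        Nat.add_sub_cancel' hj]
      exact (map_pow (MonoidHom.mulSingle D i) (a i) t).symm
  -- each g j is a length of b
  have hlength : ∀ j ≤ t,
      j * q' + (t - j) * p' + (f'.length + s2.length + r.length) ∈ mLengths b := by
    intro j hj
    obtain ⟨W, hWlen, hWirr, hWprod⟩ := hW j hj
    have hWne : W ≠ [] := by
      refine List.ne_nil_of_length_pos ?_
      rw [hWlen]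
      rcases Nat.eq_zero_or_pos j with rfl | hjp
      · have : 1 ≤ (t - 0) * p' := Nat.one_le_iff_ne_zero.mpr
          (Nat.mul_ne_zero (by omega) (by omega))
        omega
      · have : 1 ≤ j * q' := Nat.one_le_iff_ne_zero.mpr
          (Nat.mul_ne_zero (by omega) (by omega))
        omega
    have hprodb : b = (W ++ (f' ++ (s2 ++ r))).prod * w := by
      have h1 : l.prod = s.prod * r.prod := by
        rw [← hperm.prod_eq, List.prod_append]
      have h2 : s.prod = s1.prod * s2.prod := by
        rw [hs1def, hs2def, ← List.prod_append, List.take_append_drop]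
      rw [← hlprod, h1, h2, hs1prod, hQ, ← hWprod]
      simp only [List.prod_append]
      ac_rfl
    have hnil : W ++ (f' ++ (s2 ++ r)) ≠ [] := by
      simp [hWne]
    have hirrall : ∀ x ∈ W ++ (f' ++ (s2 ++ r)), Irreducible x := by
      intro x hx
      simp only [List.mem_append] at hx
      rcases hx with hx | hx | hx | hx
      · exact hWirr x hx
      · exact hf'irr x hx
      · exact (hsmem x (List.drop_subset _ _ hx)).1
      · exact hlirr x (List.mem_of_mem_filter hx)
    have := aux_mem_mLengths hbu hnil hirrall hwu hprodb
    have hlenformula : (W ++ (f' ++ (s2 ++ r))).length =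
        j * q' + (t - j) * p' + (f'.length + s2.length + r.length) := by
      simp only [List.length_append, hWlen]
      ring
    rwa [hlenformula] at this
  -- strictly monotone length function
  set F := f'.length + s2.length + r.length with hFdef
  have hgmono : StrictMono (fun j => j * q' + (t - j) * p' + F) := by
    apply strictMono_nat_of_lt_succ
    intro j
    show j * q' + (t - j) * p' + F < (j + 1) * q' + (t - (j + 1)) * p' + F
    by_cases hj : j < t
    · obtain ⟨k, hk⟩ : ∃ k, t - j = k + 1 := ⟨t - j - 1, by omega⟩
      have h3 : t - (j + 1) = k := by omega
      have h4 : (t - j) * p' = k * p' + p' := by rw [hk, add_mul, one_mul]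
      have h5 : (j + 1) * q' = j * q' + q' := by rw [add_mul, one_mul]
      rw [h3, h4, h5]
      linarith
    · have h3 : t - j = 0 := by omega
      have h4 : t - (j + 1) = 0 := by omega
      have h5 : (j + 1) * q' = j * q' + q' := by rw [add_mul, one_mul]
      rw [h3, h4, h5]
      have : 1 ≤ q' := by omega
      linarith
  -- cardinality contradiction
  have hcard : t + 1 ≤ t := by
    have h1 : ((Finset.range (t + 1)).image (fun j => j * q' + (t - j) * p' + F)).card
        = t + 1 := by
      rw [Finset.card_image_of_injective _ hgmono.injective, Finset.card_range]
    have h2 : (Finset.range (t + 1)).image (fun j => j * q' + (t - j) * p' + F) ⊆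
        hfin.toFinset.image (fun m => y + m) := by
      intro x hx
      simp only [Finset.mem_image, Finset.mem_range] at hx
      obtain ⟨j, hj, rfl⟩ := hx
      have hmem2 : j * q' + (t - j) * p' + F ∈ (fun m => y + m) '' L :=
        hEq ▸ hlength j (Nat.lt_succ_iff.mp hj)
      obtain ⟨m, hmL, hme⟩ := hmem2
      exact Finset.mem_image.mpr ⟨m, hfin.mem_toFinset.mpr hmL, hme⟩
    calc t + 1 = _ := h1.symm
    _ ≤ (hfin.toFinset.image (fun m => y + m)).card := Finset.card_le_card h2
    _ ≤ hfin.toFinset.card := Finset.card_image_le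
    _ = t := rfl
  omega
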